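/- The following contour integrals of the exponential cubic weight satisfy: I_0(e^{−x³}) + I_1(e^{−x³}) = (Γ(1/3)/3)(1 − ω), I_0(x e^{−x³}) + I_1(x e^{−x³}) = (Γ(2/3)/3)(1 − ω²), and consequently the ratio [I_0(x e^{−x³}) + I_1(x e^{−x³})] / [I_0(e^{−x³}) + I_1(e^{−x³})] equals (Γ(2/3)/Γ(1/3)) e^{iπ/3}; that is, the first recurrence coefficient β_0^{(1)} of the monic orthogonal polynomials for e^{−x³} on Γ_0 ∪ Γ_1 equals (Γ(2/3)/Γ(1/3)) e^{iπ/3}. -/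
import Mathlib

/-- The primitive third root of unity `ω = exp(2πi/3)`. -/
noncomputable def ω : ℂ := Complex.exp (2 * Real.pi * Complex.I / 3)

/-- Integral over the ray `Γ₀ = [0,∞)`. -/
noncomputable def I0 (f : ℂ → ℂ) : ℂ := ∫ t in Set.Ioi (0 : ℝ), f t

/-- Integral over the ray `Γ₁ = ω·[0,∞)`, oriented towards the origin. -/
noncomputable def I1 (f : ℂ → ℂ) : ℂ := -ω * ∫ t in Set.Ioi (0 : ℝ), f (ω * t)

/-- Integral over the ray `Γ₂ = ω²·[0,∞)`, oriented towards the origin. -/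
noncomputable def I2 (f : ℂ → ℂ) : ℂ := -ω ^ 2 * ∫ t in Set.Ioi (0 : ℝ), f (ω ^ 2 * t)

/-- `Q n p x = (−1)ⁿ 3⁻ⁿ e^{x³} (d/dx)ⁿ (e^{−x³} p(x))`. -/
noncomputable def Q (n : ℕ) (p : Polynomial ℂ) : ℂ → ℂ := fun x =>
  (-1) ^ n / 3 ^ n * Complex.exp (x ^ 3) *
    iteratedDeriv n (fun z => Complex.exp (-z ^ 3) * p.eval z) x

lemma hω3 : ω ^ 3 = 1 := by
  rw [ω, ← Complex.exp_nat_mul]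
  rw [show ((3:ℕ):ℂ) * (2 * (Real.pi:ℂ) * Complex.I / 3) = 2 * Real.pi * Complex.I by
    push_cast; ring]
  exact Complex.exp_two_pi_mul_I

lemma exp_pd3 : Complex.exp ((Real.pi:ℂ) * Complex.I / 3)
    = (1/2 : ℂ) + ((Real.sqrt 3 / 2 : ℝ) : ℂ) * Complex.I := by
  rw [show (Real.pi:ℂ) * Complex.I / 3 = ((Real.pi/3 : ℝ):ℂ) * Complex.I by push_cast; ring,
    Complex.exp_mul_I, ← Complex.ofReal_cos, ← Complex.ofReal_sin,
    Real.cos_pi_div_three, Real.sin_pi_div_three]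
  push_cast; ring

lemma h3sq : ((Real.sqrt 3 : ℝ) : ℂ) ^ 2 = 3 := by
  rw [← Complex.ofReal_pow, Real.sq_sqrt (by norm_num : (3:ℝ) ≥ 0)]
  norm_num

lemma omega_val : ω = -(1/2 : ℂ) + ((Real.sqrt 3 / 2 : ℝ) : ℂ) * Complex.I := by
  have h2 : ω = Complex.exp ((Real.pi:ℂ) * Complex.I / 3) ^ 2 := by
    rw [ω, ← Complex.exp_nat_mul]
    congr 1; push_cast; ring
  rw [h2, exp_pd3]
  push_cast
  linear_combination (Complex.I^2/4) * h3sq + (3/4 : ℂ) * Complex.I_sq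

lemma one_add_omega : (1 : ℂ) + ω = Complex.exp ((Real.pi:ℂ) * Complex.I / 3) := by
  rw [omega_val, exp_pd3]; ring

lemma omega_ne_one : ω ≠ 1 := by
  rw [omega_val]
  intro h
  have := congrArg Complex.re h
  simp at this
  norm_num at this

lemma rint1 : ∫ t in Set.Ioi (0:ℝ), Real.exp (-t^3) = Real.Gamma (1/3) / 3 := by
  have h := integral_rpow_mul_exp_neg_rpow (p:=3) (q:=0) (by norm_num) (by norm_num)
  rw [show ((0:ℝ)+1)/3 = 1/3 by norm_num] at h
  rw [show Real.Gamma (1/3) / 3 = 1/(3:ℝ) * Real.Gamma (1/3) by ring, ← h]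
  apply MeasureTheory.setIntegral_congr_fun measurableSet_Ioi
  intro x _
  simp only [Real.rpow_zero, one_mul]
  congr 1
  rw [show (3:ℝ) = ((3:ℕ):ℝ) by norm_num, Real.rpow_natCast]

lemma rint2 : ∫ t in Set.Ioi (0:ℝ), t * Real.exp (-t^3) = Real.Gamma (2/3) / 3 := by
  have h := integral_rpow_mul_exp_neg_rpow (p:=3) (q:=1) (by norm_num) (by norm_num)
  rw [show ((1:ℝ)+1)/3 = 2/3 by norm_num] at h
  rw [show Real.Gamma (2/3) / 3 = 1/(3:ℝ) * Real.Gamma (2/3) by ring, ← h]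
  apply MeasureTheory.setIntegral_congr_fun measurableSet_Ioi
  intro x _
  simp only [Real.rpow_one]
  congr 2
  rw [show (3:ℝ) = ((3:ℕ):ℝ) by norm_num, Real.rpow_natCast]

lemma cint1 : ∫ t in Set.Ioi (0:ℝ), Complex.exp (-(t:ℂ)^3) = (Real.Gamma (1/3) : ℂ) / 3 := by
  have : ∀ t : ℝ, Complex.exp (-(t:ℂ)^3) = ((Real.exp (-t^3) : ℝ) : ℂ) := by
    intro t; rw [Complex.ofReal_exp]; push_cast; ring_nf
  simp_rw [this]
  have key : ∫ t in Set.Ioi (0:ℝ), ((Real.exp (-t^3) : ℝ) : ℂ)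
      = ((∫ t in Set.Ioi (0:ℝ), Real.exp (-t^3) : ℝ) : ℂ) := integral_ofReal
  rw [key, rint1]
  push_cast; ring

lemma cint2 : ∫ t in Set.Ioi (0:ℝ), (t:ℂ) * Complex.exp (-(t:ℂ)^3)
    = (Real.Gamma (2/3) : ℂ) / 3 := by
  have : ∀ t : ℝ, (t:ℂ) * Complex.exp (-(t:ℂ)^3) = ((t * Real.exp (-t^3) : ℝ) : ℂ) := by
    intro t; rw [Complex.ofReal_mul, Complex.ofReal_exp]; push_cast; ring_nf
  simp_rw [this]
  have key : ∫ t in Set.Ioi (0:ℝ), ((t * Real.exp (-t^3) : ℝ) : ℂ)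
      = ((∫ t in Set.Ioi (0:ℝ), t * Real.exp (-t^3) : ℝ) : ℂ) := integral_ofReal
  rw [key, rint2]
  push_cast; ring

/-- `∫_{Γ₀∪Γ₁} e^{−x³} dx = (Γ(1/3)/3)(1−ω)`,
`∫_{Γ₀∪Γ₁} x e^{−x³} dx = (Γ(2/3)/3)(1−ω²)`, and hence the first recurrence
coefficient `β₀⁽¹⁾` equals `(Γ(2/3)/Γ(1/3)) e^{iπ/3}`. -/
theorem stmt7 :
    I0 (fun x => Complex.exp (-x ^ 3)) + I1 (fun x => Complex.exp (-x ^ 3)) =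
      ((Real.Gamma (1/3) : ℂ) / 3) * (1 - ω) ∧
    I0 (fun x => x * Complex.exp (-x ^ 3)) + I1 (fun x => x * Complex.exp (-x ^ 3)) =
      ((Real.Gamma (2/3) : ℂ) / 3) * (1 - ω ^ 2) ∧
    (I0 (fun x => x * Complex.exp (-x ^ 3)) + I1 (fun x => x * Complex.exp (-x ^ 3))) /
        (I0 (fun x => Complex.exp (-x ^ 3)) + I1 (fun x => Complex.exp (-x ^ 3))) =
      ((Real.Gamma (2/3) / Real.Gamma (1/3) : ℝ) : ℂ) *
        Complex.exp ((Real.pi : ℂ) * Complex.I / 3) := by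
  have hcongr : ∀ t : ℝ, (ω * (t:ℂ)) ^ 3 = (t:ℂ) ^ 3 := by
    intro t; rw [mul_pow, hω3, one_mul]
  have h1 : I0 (fun x => Complex.exp (-x ^ 3)) + I1 (fun x => Complex.exp (-x ^ 3)) =
      ((Real.Gamma (1/3) : ℂ) / 3) * (1 - ω) := by
    rw [I0, I1]
    simp_rw [hcongr]
    rw [cint1]; ring
  have h2 : I0 (fun x => x * Complex.exp (-x ^ 3)) +
      I1 (fun x => x * Complex.exp (-x ^ 3)) =
      ((Real.Gamma (2/3) : ℂ) / 3) * (1 - ω ^ 2) := by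
    rw [I0, I1]
    simp_rw [hcongr, mul_assoc]
    rw [MeasureTheory.integral_const_mul, cint2]
    ring
  refine ⟨h1, h2, ?_⟩
  rw [h1, h2]
  have hG1 : (Real.Gamma (1/3) : ℂ) ≠ 0 := by
    exact_mod_cast (Real.Gamma_pos_of_pos (by norm_num : (0:ℝ) < 1/3)).ne'
  have hω1 : (1:ℂ) - ω ≠ 0 := sub_ne_zero.mpr (Ne.symm omega_ne_one)
  rw [← one_add_omega, Complex.ofReal_div]
  field_simp
  ring
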